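/- Let F : ℝ≥0 → ℝ be Lipschitz convex, φ₊ : (0,∞) → (0,∞) nondecreasing right-continuous, φ₋ : (0,∞) → (−∞,0) nonincreasing right-continuous, and γ(l) := (1/2)∫₀^l (1/φ₊(m) − 1/φ₋(m)) dm with γ(0+)=0 and γ(∞)=∞. Define A±(l) := A±(0) + ∫₀^l (e^{γ(z)}/φ±(z)) (∫_{(z,∞)} e^{-γ(m)} F''(dm)) dz with A±(0) := ±F'(0) ± ∫_{(0,∞)} e^{-γ(m)} F''(dm). Then for all l > 0: (1/2)(A₊(l) − A₋(l)) = F'(l) + e^{γ(l)} ∫_{(l,∞)} e^{-γ(m)} F''(dm). -/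

import Mathlib

open MeasureTheory Set Filter

/-- Identity (Hrel1): `(1/2)(A₊(l) − A₋(l)) = F'(l) + e^{γ(l)} ∫_{(l,∞)} e^{-γ} dF''`. -/
theorem stmt1 (F : ℝ → ℝ) (F' : StieltjesFunction ℝ)
    (K : NNReal) (hLip : LipschitzWith K F)
    (hconv : ConvexOn ℝ (Set.Ici 0) F)
    (hF' : ∀ x : ℝ, 0 ≤ x → HasDerivWithinAt F (F' x) (Set.Ioi x) x)
    (φp φm : ℝ → ℝ)
    (hφp_pos : ∀ l : ℝ, 0 < l → 0 < φp l)
    (hφm_neg : ∀ l : ℝ, 0 < l → φm l < 0)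
    (hφp_mono : MonotoneOn φp (Set.Ioi 0))
    (hφm_anti : AntitoneOn φm (Set.Ioi 0))
    (hφp_rc : ∀ x : ℝ, 0 < x → ContinuousWithinAt φp (Set.Ici x) x)
    (hφm_rc : ∀ x : ℝ, 0 < x → ContinuousWithinAt φm (Set.Ici x) x)
    (γ : ℝ → ℝ)
    (hγ : ∀ l : ℝ, 0 < l → γ l = (1/2) * ∫ m in (0:ℝ)..l, (1 / φp m - 1 / φm m))
    (hγ0 : Tendsto γ (nhdsWithin 0 (Set.Ioi 0)) (nhds 0))
    (hγtop : Tendsto γ atTop atTop)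
    (Ap Am : ℝ → ℝ)
    (hAp0 : Ap 0 = F' 0 + ∫ m in Set.Ioi (0:ℝ), Real.exp (-γ m) ∂F'.measure)
    (hAm0 : Am 0 = -(F' 0) - ∫ m in Set.Ioi (0:ℝ), Real.exp (-γ m) ∂F'.measure)
    (hAp : ∀ l : ℝ, 0 ≤ l → Ap l = Ap 0 + ∫ z in (0:ℝ)..l,
        (Real.exp (γ z) / φp z) * (∫ m in Set.Ioi z, Real.exp (-γ m) ∂F'.measure))
    (hAm : ∀ l : ℝ, 0 ≤ l → Am l = Am 0 + ∫ z in (0:ℝ)..l,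
        (Real.exp (γ z) / φm z) * (∫ m in Set.Ioi z, Real.exp (-γ m) ∂F'.measure))
    (l : ℝ) (hl : 0 < l) :
    (1/2) * (Ap l - Am l)
      = F' l + Real.exp (γ l) * ∫ m in Set.Ioi l, Real.exp (-γ m) ∂F'.measure := by
  classical
  set μ := F'.measure with hμdef
  set g : ℝ → ℝ := fun m => Real.exp (-γ m) with hgdef
  set G : ℝ → ℝ := fun z => ∫ m in Set.Ioi z, g m ∂μ with hGdef
  set f₀ : ℝ → ℝ := fun m => 1 / φp m - 1 / φm m with hf₀def
  set u : ℝ → ℝ := fun z => Real.exp (γ z) with hudef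
  set D : ℝ → ℝ := fun z => (1/2) * f₀ z * u z with hDdef
  -- positivity of f₀
  have hf₀_pos : ∀ m : ℝ, 0 < m → 0 < f₀ m := by
    intro m hm
    have h1 : 0 < 1 / φp m := one_div_pos.mpr (hφp_pos m hm)
    have h2 : 1 / φm m < 0 := by
      have := hφm_neg m hm; exact one_div_neg.mpr this
    simp only [hf₀def]; linarith
  -- antitonicity of f₀ on (0,∞)
  have hf₀_anti : AntitoneOn f₀ (Set.Ioi 0) := by
    intro x hx y hy hxy
    have h1 : 1 / φp y ≤ 1 / φp x :=
      one_div_le_one_div_of_le (hφp_pos x hx) (hφp_mono hx hy hxy)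
    have h2 : 1 / φm x ≤ 1 / φm y :=
      one_div_le_one_div_of_neg_of_le (hφm_neg x hx) (hφm_anti hx hy hxy)
    simp only [hf₀def]; linarith
  -- |F' x| ≤ K for x ≥ 0
  have hK : ∀ x : ℝ, 0 ≤ x → |F' x| ≤ (K : ℝ) := by
    intro x hx
    have hd := hF' x hx
    rw [hasDerivWithinAt_iff_tendsto_slope] at hd
    have hne : (Set.Ioi x \ {x} : Set ℝ) = Set.Ioi x := by
      simp [Set.diff_singleton_eq_self]
    rw [hne] at hd
    have habs : Tendsto (fun y => |slope F x y|) (nhdsWithin x (Set.Ioi x)) (nhds |F' x|) :=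
      hd.abs
    refine le_of_tendsto habs ?_
    filter_upwards [self_mem_nhdsWithin] with y hy
    have hyx : x < y := hy
    have hdist : |F y - F x| ≤ (K : ℝ) * |y - x| := by
      have := hLip.dist_le_mul y x
      rwa [Real.dist_eq, Real.dist_eq] at this
    rw [slope_def_field]
    rw [div_eq_mul_inv, abs_mul, abs_inv]
    have hpos : 0 < |y - x| := by rw [abs_pos]; exact sub_ne_zero.mpr hyx.ne'
    calc |F y - F x| * |y - x|⁻¹ ≤ ((K : ℝ) * |y - x|) * |y - x|⁻¹ := by
          exact mul_le_mul_of_nonneg_right hdist (by positivity)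
      _ = (K : ℝ) := by field_simp
  -- F' bounded above everywhere
  have hbdd : ∀ x : ℝ, F' x ≤ (K : ℝ) := by
    intro x
    rcases le_or_gt 0 x with h | h
    · exact le_trans (le_abs_self _) (hK x h)
    · exact le_trans (F'.mono h.le) (le_trans (le_abs_self _) (hK 0 le_rfl))
  -- μ is finite on Ici 0
  have hμIci : μ (Set.Ici (0:ℝ)) ≠ ⊤ := by
    have hbd : BddAbove (Set.range F') := ⟨(K : ℝ), by rintro _ ⟨x, rfl⟩; exact hbdd x⟩
    have hlim : Tendsto F' atTop (nhds (⨆ x, F' x)) := tendsto_atTop_ciSup F'.mono hbd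
    rw [hμdef, F'.measure_Ici hlim]
    exact ENNReal.ofReal_ne_top
  have hμIoi : ∀ a : ℝ, 0 ≤ a → μ (Set.Ioi a) < ⊤ := by
    intro a ha
    refine lt_of_le_of_lt (measure_mono ?_) hμIci.lt_top
    exact fun x hx => le_trans ha (le_of_lt hx)
  -- integrability of f₀ on intervals
  have hf₀_meas : ∀ s : Set ℝ, MeasurableSet s → s ⊆ Set.Ioi 0 →
      AEMeasurable f₀ (volume.restrict s) := fun s hs hsub =>
    aemeasurable_restrict_of_antitoneOn hs (hf₀_anti.mono hsub)
  have hIIf : ∀ a b : ℝ, 0 < a → a ≤ b → IntegrableOn f₀ (Set.Ioc a b) := by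
    intro a b ha hab
    haveI : IsFiniteMeasure (volume.restrict (Set.Ioc a b)) := ⟨by
      rw [Measure.restrict_apply_univ]; exact measure_Ioc_lt_top⟩
    refine Integrable.mono' (integrable_const (f₀ a))
      ((hf₀_meas _ measurableSet_Ioc (fun x hx => lt_trans ha hx.1)).aestronglyMeasurable) ?_
    filter_upwards [ae_restrict_mem measurableSet_Ioc] with x hx
    rw [Real.norm_eq_abs, abs_of_pos (hf₀_pos x (lt_trans ha hx.1))]
    exact hf₀_anti (Set.mem_Ioi.mpr ha) (Set.mem_Ioi.mpr (lt_trans ha hx.1)) hx.1.le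
  have hint : ∀ b : ℝ, 0 < b → IntegrableOn f₀ (Set.Ioc 0 b) := by
    have hex : ∃ c : ℝ, 0 < c ∧ IntegrableOn f₀ (Set.Ioc 0 c) := by
      by_contra hno
      push_neg at hno
      have hzero : ∀ x : ℝ, 0 < x → γ x = 0 := by
        intro x hx
        rw [hγ x hx, intervalIntegral.integral_undef, mul_zero]
        rw [intervalIntegrable_iff_integrableOn_Ioc_of_le hx.le]
        exact hno x hx
      obtain ⟨x, hx1, hx2⟩ :=
        ((hγtop.eventually_ge_atTop 1).and (eventually_ge_atTop (1:ℝ))).exists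
      have := hzero x (lt_of_lt_of_le one_pos hx2)
      linarith
    obtain ⟨c, hc, hic⟩ := hex
    intro b hb
    rcases le_total b c with h | h
    · exact hic.mono_set (Set.Ioc_subset_Ioc_right h)
    · rw [← Set.Ioc_union_Ioc_eq_Ioc hc.le h]
      exact hic.union (hIIf c b hc h)
  have hII : ∀ b : ℝ, 0 < b → IntervalIntegrable f₀ volume 0 b := fun b hb =>
    (intervalIntegrable_iff_integrableOn_Ioc_of_le hb.le).mpr (hint b hb)
  have hIIab : ∀ a b : ℝ, 0 < a → a ≤ b → IntervalIntegrable f₀ volume a b := fun a b ha hab =>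
    (intervalIntegrable_iff_integrableOn_Ioc_of_le hab).mpr (hIIf a b ha hab)
  have hγab : ∀ a b : ℝ, 0 < a → a ≤ b → γ b = γ a + (1/2) * ∫ z in a..b, f₀ z := by
    intro a b ha hab
    rw [hγ a ha, hγ b (lt_of_lt_of_le ha hab),
      ← intervalIntegral.integral_add_adjacent_intervals (hII a ha) (hIIab a b ha hab)]
    ring
  have hγset : ∀ a : ℝ, 0 < a → γ a = (1/2) * ∫ z in Set.Ioc 0 a, f₀ z := by
    intro a ha
    rw [hγ a ha, intervalIntegral.integral_of_le ha.le]
  have hγ_nonneg : ∀ x : ℝ, 0 < x → 0 ≤ γ x := by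
    intro x hx
    rw [hγset x hx]
    refine mul_nonneg (by norm_num) (setIntegral_nonneg measurableSet_Ioc ?_)
    exact fun m hm => (hf₀_pos m hm.1).le
  have hγ_mono : MonotoneOn γ (Set.Ioi 0) := by
    intro a ha b hb hab
    rw [hγab a b ha hab]
    have : 0 ≤ ∫ z in a..b, f₀ z := by
      rw [intervalIntegral.integral_of_le hab]
      exact setIntegral_nonneg measurableSet_Ioc fun m hm => (hf₀_pos m (lt_trans ha hm.1)).le
    linarith
  have hγ_meas : ∀ (ν : Measure ℝ) (s : Set ℝ), MeasurableSet s → s ⊆ Set.Ioi 0 →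
      AEMeasurable γ (ν.restrict s) := fun ν s hs hsub =>
    aemeasurable_restrict_of_monotoneOn hs (hγ_mono.mono hsub)
  have hg_meas : ∀ s : Set ℝ, MeasurableSet s → s ⊆ Set.Ioi 0 →
      AEStronglyMeasurable g (μ.restrict s) := by
    intro s hs hsub
    exact (Real.measurable_exp.comp_aemeasurable (hγ_meas μ s hs hsub).neg).aestronglyMeasurable
  have hg_pos : ∀ m : ℝ, 0 < g m := fun m => Real.exp_pos _
  have hg_le_one : ∀ m : ℝ, 0 < m → g m ≤ 1 := by
    intro m hm
    simp only [hgdef]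
    rw [Real.exp_le_one_iff, neg_nonpos]
    exact hγ_nonneg m hm
  have hg_int : ∀ a : ℝ, 0 ≤ a → IntegrableOn g (Set.Ioi a) μ := by
    intro a ha
    haveI : IsFiniteMeasure (μ.restrict (Set.Ioi a)) := ⟨by
      rw [Measure.restrict_apply_univ]; exact hμIoi a ha⟩
    refine Integrable.mono' (integrable_const 1)
      (hg_meas _ measurableSet_Ioi (fun x hx => lt_of_le_of_lt ha hx)) ?_
    filter_upwards [ae_restrict_mem measurableSet_Ioi] with m hm
    rw [Real.norm_eq_abs, abs_of_pos (hg_pos m)]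
    exact hg_le_one m (lt_of_le_of_lt ha hm)
  have hGsplit : ∀ a b : ℝ, 0 ≤ a → a ≤ b → G a = (∫ m in Set.Ioc a b, g m ∂μ) + G b := by
    intro a b ha hab
    have hdisj : Disjoint (Set.Ioc a b) (Set.Ioi b) := by
      rw [Set.disjoint_left]
      rintro x ⟨_, hxb⟩ hx
      exact absurd hx (not_lt.mpr hxb)
    have hun : Set.Ioc a b ∪ Set.Ioi b = Set.Ioi a := Set.Ioc_union_Ioi_eq_Ioi hab
    simp only [hGdef]
    rw [← hun, setIntegral_union hdisj measurableSet_Ioi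
      ((hg_int a ha).mono_set Set.Ioc_subset_Ioi_self) (hg_int b (le_trans ha hab))]
  have hG_nonneg : ∀ z : ℝ, 0 ≤ G z :=
    fun z => setIntegral_nonneg measurableSet_Ioi fun m _ => (hg_pos m).le
  have hG_bound : ∀ z : ℝ, 0 ≤ z → G z ≤ G 0 := by
    intro z hz
    rw [hGsplit 0 z le_rfl hz]
    have : 0 ≤ ∫ m in Set.Ioc 0 z, g m ∂μ :=
      setIntegral_nonneg measurableSet_Ioc fun m _ => (hg_pos m).le
    linarith
  have hG_anti : AntitoneOn G (Set.Ioi 0) := by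
    intro a ha b hb hab
    rw [hGsplit a b (le_of_lt ha) hab]
    have : 0 ≤ ∫ m in Set.Ioc a b, g m ∂μ :=
      setIntegral_nonneg measurableSet_Ioc fun m _ => (hg_pos m).le
    linarith
  have hG_meas : ∀ s : Set ℝ, MeasurableSet s → s ⊆ Set.Ioi 0 →
      AEMeasurable G (volume.restrict s) := fun s hs hsub =>
    aemeasurable_restrict_of_antitoneOn hs (hG_anti.mono hsub)
  -- right continuity of f₀, right derivative of γ
  have hf₀_rc : ∀ x : ℝ, 0 < x → ContinuousWithinAt f₀ (Set.Ici x) x := by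
    intro x hx
    have h1 : ContinuousWithinAt (fun y => 1 / φp y) (Set.Ici x) x :=
      continuousWithinAt_const.div (hφp_rc x hx) (ne_of_gt (hφp_pos x hx))
    have h2 : ContinuousWithinAt (fun y => 1 / φm y) (Set.Ici x) x :=
      continuousWithinAt_const.div (hφm_rc x hx) (ne_of_lt (hφm_neg x hx))
    exact h1.sub h2
  have hγ_deriv : ∀ x : ℝ, 0 < x → HasDerivWithinAt γ ((1/2) * f₀ x) (Set.Ici x) x := by
    intro x hx
    have hc : 0 < x/2 := half_pos hx
    have hcx : x/2 ≤ x := half_le_self hx.le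
    have hmeasAt : StronglyMeasurableAtFilter f₀ (nhdsWithin x (Set.Ioi x)) volume := by
      refine ⟨Set.Ici (x/2), ?_,
        (hf₀_meas _ measurableSet_Ici (fun y hy => lt_of_lt_of_le hc hy)).aestronglyMeasurable⟩
      exact mem_nhdsWithin_of_mem_nhds (Ici_mem_nhds (half_lt_self hx))
    have hftc : HasDerivWithinAt (fun w => ∫ t in (x/2)..w, f₀ t) (f₀ x) (Set.Ici x) x :=
      intervalIntegral.integral_hasDerivWithinAt_right (hIIab _ _ hc hcx) hmeasAt
        ((hf₀_rc x hx).mono Set.Ioi_subset_Ici_self)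
    have hftc2 : HasDerivWithinAt (fun w => γ (x/2) + (1/2) * ∫ t in (x/2)..w, f₀ t)
        ((1/2) * f₀ x) (Set.Ici x) x := (hftc.const_mul (1/2)).const_add (γ (x/2))
    refine hftc2.congr ?_ ?_
    · exact fun y hy => hγab (x/2) y hc (le_trans hcx hy)
    · exact hγab (x/2) x hc hcx
  have hu_deriv : ∀ x : ℝ, 0 < x → HasDerivWithinAt u (D x) (Set.Ioi x) x := by
    intro x hx
    have h := ((hγ_deriv x hx).mono Set.Ioi_subset_Ici_self).exp
    have : Real.exp (γ x) * ((1/2) * f₀ x) = D x := by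
      simp only [hDdef, hudef]; ring
    rw [this] at h
    exact h
  have hγ_cont : ∀ x : ℝ, 0 < x → ContinuousAt γ x := by
    intro x hx
    have hc : 0 < x/2 := half_pos hx
    have hIcc : IntegrableOn f₀ (Set.Icc (x/2) (x+1)) := by
      rw [integrableOn_Icc_iff_integrableOn_Ioc]
      exact hIIf (x/2) (x+1) hc (by linarith)
    have hprim : ContinuousOn (fun w => (1/2) * ∫ t in Set.Ioc (x/2) w, f₀ t)
        (Set.Icc (x/2) (x+1)) := continuousOn_const.mul (intervalIntegral.continuousOn_primitive hIcc)
    have heq : Set.EqOn γ (fun w => γ (x/2) + (1/2) * ∫ t in Set.Ioc (x/2) w, f₀ t)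
        (Set.Icc (x/2) (x+1)) := by
      intro w hw
      rw [hγab (x/2) w hc hw.1, intervalIntegral.integral_of_le hw.1]
    have hcont : ContinuousOn γ (Set.Icc (x/2) (x+1)) :=
      (continuousOn_const.add hprim).congr heq
    exact hcont.continuousAt (Icc_mem_nhds (by linarith) (by linarith))
  have hD_meas : ∀ s : Set ℝ, MeasurableSet s → s ⊆ Set.Ioi 0 →
      AEMeasurable D (volume.restrict s) := by
    intro s hs hsub
    exact ((hf₀_meas s hs hsub).const_mul (1/2)).mul
      (Real.measurable_exp.comp_aemeasurable (hγ_meas volume s hs hsub))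
  have hD_nonneg : ∀ z : ℝ, 0 < z → 0 ≤ D z := by
    intro z hz
    exact mul_nonneg (mul_nonneg (by norm_num) (hf₀_pos z hz).le) (Real.exp_pos _).le
  have hFTC : ∀ x y : ℝ, 0 < x → x ≤ y → y ≤ l → (∫ z in Set.Ioc x y, D z) = u y - u x := by
    intro x y hx hxy hyl
    have hγcc : ContinuousOn γ (Set.Icc x y) :=
      fun z hz => (hγ_cont z (lt_of_lt_of_le hx hz.1)).continuousWithinAt
    have hcont : ContinuousOn u (Set.Icc x y) := Real.continuous_exp.comp_continuousOn hγcc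
    have hsub : Set.Ioc x y ⊆ Set.Ioi 0 := fun z hz => lt_trans hx hz.1
    have hDint : IntegrableOn D (Set.Ioc x y) := by
      haveI : IsFiniteMeasure (volume.restrict (Set.Ioc x y)) := ⟨by
        rw [Measure.restrict_apply_univ]; exact measure_Ioc_lt_top⟩
      refine Integrable.mono' (integrable_const ((1/2) * f₀ x * Real.exp (γ l)))
        ((hD_meas _ measurableSet_Ioc hsub).aestronglyMeasurable) ?_
      filter_upwards [ae_restrict_mem measurableSet_Ioc] with z hz
      have hz0 : (0:ℝ) < z := hsub hz
      have h1 : f₀ z ≤ f₀ x := hf₀_anti (Set.mem_Ioi.mpr hx) (Set.mem_Ioi.mpr hz0) hz.1.le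
      have h2 : γ z ≤ γ l := hγ_mono (Set.mem_Ioi.mpr hz0) (Set.mem_Ioi.mpr hl)
        (le_trans hz.2 hyl)
      have h3 : Real.exp (γ z) ≤ Real.exp (γ l) := Real.exp_le_exp.mpr h2
      rw [Real.norm_eq_abs, abs_of_nonneg (hD_nonneg z hz0)]
      simp only [hDdef, hudef]
      have h4 : f₀ z * Real.exp (γ z) ≤ f₀ x * Real.exp (γ l) :=
        mul_le_mul h1 h3 (Real.exp_pos (γ z)).le (hf₀_pos x hx).le
      calc 1 / 2 * f₀ z * Real.exp (γ z) = 1 / 2 * (f₀ z * Real.exp (γ z)) := by ring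
        _ ≤ 1 / 2 * (f₀ x * Real.exp (γ l)) := mul_le_mul_of_nonneg_left h4 (by norm_num)
        _ = 1 / 2 * f₀ x * Real.exp (γ l) := by ring
    have h := intervalIntegral.integral_eq_sub_of_hasDeriv_right_of_le hxy hcont
      (fun z hz => hu_deriv z (lt_trans hx hz.1))
      ((intervalIntegrable_iff_integrableOn_Ioc_of_le hxy).mpr hDint)
    rw [intervalIntegral.integral_of_le hxy] at h
    exact h
  have hDG_int : IntegrableOn (fun z => D z * G z) (Set.Ioc 0 l) := by
    have hdom : IntegrableOn (fun z => ((1/2) * Real.exp (γ l) * G 0) * f₀ z) (Set.Ioc 0 l) :=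
      (hint l hl).const_mul _
    refine Integrable.mono' hdom
      (((hD_meas _ measurableSet_Ioc (fun z hz => hz.1)).mul
        (hG_meas _ measurableSet_Ioc (fun z hz => hz.1))).aestronglyMeasurable) ?_
    filter_upwards [ae_restrict_mem measurableSet_Ioc] with z hz
    have hz0 := hz.1
    have hfz := (hf₀_pos z hz0).le
    have hu1 : Real.exp (γ z) ≤ Real.exp (γ l) :=
      Real.exp_le_exp.mpr (hγ_mono (Set.mem_Ioi.mpr hz0) (Set.mem_Ioi.mpr hl) hz.2)
    have hG1 : G z ≤ G 0 := hG_bound z hz0.le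
    have hG2 : 0 ≤ G z := hG_nonneg z
    rw [Real.norm_eq_abs, abs_of_nonneg (mul_nonneg (hD_nonneg z hz0) hG2)]
    simp only [hDdef, hudef]
    have h4 : f₀ z * (Real.exp (γ z) * G z) ≤ f₀ z * (Real.exp (γ l) * G 0) :=
      mul_le_mul_of_nonneg_left (mul_le_mul hu1 hG1 hG2 (Real.exp_pos (γ l)).le) hfz
    calc 1 / 2 * f₀ z * Real.exp (γ z) * G z
        = 1 / 2 * (f₀ z * (Real.exp (γ z) * G z)) := by ring
      _ ≤ 1 / 2 * (f₀ z * (Real.exp (γ l) * G 0)) := mul_le_mul_of_nonneg_left h4 (by norm_num)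
      _ = 1 / 2 * Real.exp (γ l) * G 0 * f₀ z := by ring
  -- the key integration-by-parts identity on [a, l], via Fubini
  have hstar : ∀ a : ℝ, 0 < a → a < l →
      (∫ z in Set.Ioc a l, D z * G z) = (F' l - F' a) + u l * G l - u a * G a := by
    intro a ha hal
    haveI hfin1 : IsFiniteMeasure (volume.restrict (Set.Ioc a l)) := ⟨by
      rw [Measure.restrict_apply_univ]; exact measure_Ioc_lt_top⟩
    haveI hfin2 : IsFiniteMeasure (μ.restrict (Set.Ioi a)) := ⟨by
      rw [Measure.restrict_apply_univ]; exact hμIoi a ha.le⟩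
    set P : ℝ → ℝ → ℝ := fun z m => if z < m then D z * g m else 0 with hPdef
    have step1 : (∫ z in Set.Ioc a l, D z * G z)
        = ∫ z in Set.Ioc a l, (∫ m in Set.Ioi a, P z m ∂μ) := by
      refine setIntegral_congr_fun measurableSet_Ioc ?_
      intro z hz
      have hza : a < z := hz.1
      have h1 : ∀ m : ℝ, P z m = D z * (Set.Ioi z).indicator g m := by
        intro m
        simp only [hPdef, Set.indicator_apply, Set.mem_Ioi, mul_ite, mul_zero]
      simp only [h1]
      rw [integral_const_mul, setIntegral_indicator measurableSet_Ioi,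
        Set.inter_eq_self_of_subset_right (Set.Ioi_subset_Ioi hza.le)]
    have hPmeas : AEStronglyMeasurable (Function.uncurry P)
        ((volume.restrict (Set.Ioc a l)).prod (μ.restrict (Set.Ioi a))) := by
      have hD' : AEMeasurable (fun p : ℝ × ℝ => D p.1)
          ((volume.restrict (Set.Ioc a l)).prod (μ.restrict (Set.Ioi a))) :=
        (hD_meas _ measurableSet_Ioc (fun z hz => lt_trans ha hz.1)).comp_fst
      have hg' : AEMeasurable (fun p : ℝ × ℝ => g p.2)
          ((volume.restrict (Set.Ioc a l)).prod (μ.restrict (Set.Ioi a))) :=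
        (Real.measurable_exp.comp_aemeasurable
          (hγ_meas μ _ measurableSet_Ioi (fun m hm => lt_trans ha hm)).neg).comp_snd
      have hPeq : Function.uncurry P
          = Set.indicator {p : ℝ × ℝ | p.1 < p.2} (fun p => D p.1 * g p.2) := by
        funext p
        simp only [Function.uncurry, hPdef, Set.indicator_apply, Set.mem_setOf_eq]
      rw [hPeq]
      exact ((hD'.mul hg').indicator
        (measurableSet_lt measurable_fst measurable_snd)).aestronglyMeasurable
    have hPint : Integrable (Function.uncurry P)
        ((volume.restrict (Set.Ioc a l)).prod (μ.restrict (Set.Ioi a))) := by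
      refine Integrable.mono' (integrable_const ((1/2) * f₀ a * Real.exp (γ l))) hPmeas ?_
      rw [Measure.prod_restrict]
      filter_upwards [ae_restrict_mem (measurableSet_Ioc.prod measurableSet_Ioi)] with p hp
      obtain ⟨hp1, hp2⟩ := hp
      have hz0 : (0:ℝ) < p.1 := lt_trans ha hp1.1
      have hCpos : 0 ≤ (1/2) * f₀ a * Real.exp (γ l) :=
        mul_nonneg (mul_nonneg (by norm_num) (hf₀_pos a ha).le) (Real.exp_pos _).le
      simp only [Function.uncurry, hPdef]
      by_cases hlt : p.1 < p.2
      · rw [if_pos hlt, Real.norm_eq_abs,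
          abs_of_nonneg (mul_nonneg (hD_nonneg _ hz0) (hg_pos _).le)]
        have hD1 : D p.1 ≤ (1/2) * f₀ a * Real.exp (γ l) := by
          have h1 : f₀ p.1 ≤ f₀ a :=
            hf₀_anti (Set.mem_Ioi.mpr ha) (Set.mem_Ioi.mpr hz0) hp1.1.le
          have h3 : Real.exp (γ p.1) ≤ Real.exp (γ l) := Real.exp_le_exp.mpr
            (hγ_mono (Set.mem_Ioi.mpr hz0) (Set.mem_Ioi.mpr hl) hp1.2)
          have h4 : f₀ p.1 * Real.exp (γ p.1) ≤ f₀ a * Real.exp (γ l) :=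
            mul_le_mul h1 h3 (Real.exp_pos _).le (hf₀_pos a ha).le
          calc D p.1 = 1 / 2 * (f₀ p.1 * Real.exp (γ p.1)) := by
                simp only [hDdef, hudef]; ring
            _ ≤ 1 / 2 * (f₀ a * Real.exp (γ l)) := mul_le_mul_of_nonneg_left h4 (by norm_num)
            _ = 1 / 2 * f₀ a * Real.exp (γ l) := by ring
        have hgle : g p.2 ≤ 1 := hg_le_one _ (lt_trans hz0 hlt)
        calc D p.1 * g p.2 ≤ ((1/2) * f₀ a * Real.exp (γ l)) * 1 :=
              mul_le_mul hD1 hgle (hg_pos _).le hCpos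
          _ = (1/2) * f₀ a * Real.exp (γ l) := mul_one _
      · rw [if_neg hlt]
        simpa using hCpos
    have step2 : ∫ z in Set.Ioc a l, (∫ m in Set.Ioi a, P z m ∂μ)
        = ∫ m in Set.Ioi a, (∫ z in Set.Ioc a l, P z m) ∂μ :=
      integral_integral_swap hPint
    have step3 : ∫ m in Set.Ioi a, (∫ z in Set.Ioc a l, P z m) ∂μ
        = ∫ m in Set.Ioi a, (g m * (u (min m l) - u a)) ∂μ := by
      refine setIntegral_congr_fun measurableSet_Ioi ?_
      intro m hm
      have hma : a < m := hm
      have h1 : ∀ z : ℝ, P z m = (Set.Iio m).indicator D z * g m := by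
        intro z
        simp only [hPdef, Set.indicator_apply, Set.mem_Iio, ite_mul, zero_mul]
      simp only [h1]
      rw [integral_mul_const, setIntegral_indicator measurableSet_Iio]
      rcases le_or_gt m l with hml | hml
      · have hset : Set.Ioc a l ∩ Set.Iio m = Set.Ioo a m := by
          ext z
          simp only [Set.mem_inter_iff, Set.mem_Ioc, Set.mem_Iio, Set.mem_Ioo]
          constructor
          · rintro ⟨⟨h1', _⟩, h3⟩; exact ⟨h1', h3⟩
          · rintro ⟨h1', h3⟩; exact ⟨⟨h1', le_trans h3.le hml⟩, h3⟩
        rw [hset, ← integral_Ioc_eq_integral_Ioo, hFTC a m ha hma.le hml, min_eq_left hml]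
        ring
      · have hset : Set.Ioc a l ∩ Set.Iio m = Set.Ioc a l := by
          rw [Set.inter_eq_self_of_subset_left]
          exact fun z hz => lt_of_le_of_lt hz.2 hml
        rw [hset, hFTC a l ha hal.le le_rfl, min_eq_right hml.le]
        ring
    have hInt1 : IntegrableOn (fun m => g m * (u (min m l) - u a)) (Set.Ioi a) μ := by
      refine Integrable.mono' (integrable_const (Real.exp (γ l) + Real.exp (γ a))) ?_ ?_
      · have h1 : AEMeasurable g (μ.restrict (Set.Ioi a)) :=
          Real.measurable_exp.comp_aemeasurable
            (hγ_meas μ _ measurableSet_Ioi (fun m hm => lt_trans ha hm)).neg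
        have h2 : MonotoneOn (fun m => γ (min m l)) (Set.Ioi a) := by
          intro s hs t ht hst
          exact hγ_mono (Set.mem_Ioi.mpr (lt_min (lt_trans ha hs) hl))
            (Set.mem_Ioi.mpr (lt_min (lt_trans ha ht) hl)) (min_le_min hst le_rfl)
        have h2' : AEMeasurable (fun m => u (min m l)) (μ.restrict (Set.Ioi a)) :=
          Real.measurable_exp.comp_aemeasurable
            (aemeasurable_restrict_of_monotoneOn measurableSet_Ioi h2)
        exact (h1.mul (h2'.sub aemeasurable_const)).aestronglyMeasurable
      · filter_upwards [ae_restrict_mem measurableSet_Ioi] with m hm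
        have hm0 : 0 < m := lt_trans ha hm
        have hmin0 : 0 < min m l := lt_min hm0 hl
        have h5 : u (min m l) ≤ Real.exp (γ l) := Real.exp_le_exp.mpr
          (hγ_mono (Set.mem_Ioi.mpr hmin0) (Set.mem_Ioi.mpr hl) (min_le_right m l))
        have h6 : (0:ℝ) < u (min m l) := Real.exp_pos _
        have h7 : (0:ℝ) < Real.exp (γ a) := Real.exp_pos _
        rw [Real.norm_eq_abs, abs_mul]
        have h9 : |g m| ≤ 1 := by
          rw [abs_of_pos (hg_pos m)]; exact hg_le_one m hm0
        have h10 : |u (min m l) - u a| ≤ Real.exp (γ l) + Real.exp (γ a) := by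
          rw [abs_le]
          constructor
          · simp only [hudef]
            have := Real.exp_pos (γ (min m l))
            linarith
          · simp only [hudef]
            linarith
        calc |g m| * |u (min m l) - u a| ≤ 1 * (Real.exp (γ l) + Real.exp (γ a)) :=
              mul_le_mul h9 h10 (abs_nonneg _) zero_le_one
          _ = Real.exp (γ l) + Real.exp (γ a) := one_mul _
    have step4 : ∫ m in Set.Ioi a, (g m * (u (min m l) - u a)) ∂μ
        = ((μ (Set.Ioc a l)).toReal - u a * ∫ m in Set.Ioc a l, g m ∂μ)
            + (u l - u a) * G l := by
      have hun : Set.Ioc a l ∪ Set.Ioi l = Set.Ioi a := Set.Ioc_union_Ioi_eq_Ioi hal.le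
      have hdisj : Disjoint (Set.Ioc a l) (Set.Ioi l) := by
        rw [Set.disjoint_left]; rintro x ⟨_, hx2⟩ hx3; exact absurd hx3 (not_lt.mpr hx2)
      rw [← hun, setIntegral_union hdisj measurableSet_Ioi
        (hInt1.mono_set Set.Ioc_subset_Ioi_self) (hInt1.mono_set (Set.Ioi_subset_Ioi hal.le))]
      congr 1
      · have e1 : Set.EqOn (fun m => g m * (u (min m l) - u a)) (fun m => 1 - u a * g m)
            (Set.Ioc a l) := by
          intro m hm
          simp only
          rw [min_eq_left hm.2]
          simp only [hgdef, hudef]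
          rw [mul_sub, ← Real.exp_add, neg_add_cancel, Real.exp_zero]
          ring
        rw [setIntegral_congr_fun measurableSet_Ioc e1]
        haveI : IsFiniteMeasure (μ.restrict (Set.Ioc a l)) := ⟨by
          rw [Measure.restrict_apply_univ]
          exact lt_of_le_of_lt (measure_mono Set.Ioc_subset_Ioi_self) (hμIoi a ha.le)⟩
        have hgint : IntegrableOn g (Set.Ioc a l) μ :=
          (hg_int a ha.le).mono_set Set.Ioc_subset_Ioi_self
        rw [integral_sub (integrable_const 1) (hgint.const_mul (u a)), setIntegral_const,
          integral_const_mul]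
        simp [Measure.real]
      · have e2 : Set.EqOn (fun m => g m * (u (min m l) - u a))
            (fun m => g m * (u l - u a)) (Set.Ioi l) := by
          intro m hm
          simp only
          rw [min_eq_right (le_of_lt hm)]
        rw [setIntegral_congr_fun measurableSet_Ioi e2, integral_mul_const, mul_comm]
    have hμIoc : (μ (Set.Ioc a l)).toReal = F' l - F' a := by
      rw [hμdef, F'.measure_Ioc, ENNReal.toReal_ofReal (sub_nonneg.mpr (F'.mono hal.le))]
    have hGa : G a = (∫ m in Set.Ioc a l, g m ∂μ) + G l := hGsplit a l ha.le hal.le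
    rw [step1, step2, step3, step4, hμIoc, hGa]
    ring
  -- limit a → 0⁺ of the identity hstar
  have hmem : Set.Ioo (0:ℝ) l ∈ nhdsWithin (0:ℝ) (Set.Ioi 0) :=
    Ioo_mem_nhdsGT_of_mem ⟨le_rfl, hl⟩
  have key : (∫ z in Set.Ioc 0 l, D z * G z) = (F' l - F' 0) + u l * G l - 1 * G 0 := by
    have T1' : Tendsto (fun a => ∫ z in Set.Ioc 0 a, D z * G z)
        (nhdsWithin 0 (Set.Ioi 0)) (nhds 0) := by
      rw [tendsto_zero_iff_norm_tendsto_zero]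
      refine squeeze_zero' (g := fun a => (Real.exp (γ l) * G 0) * γ a)
        (by filter_upwards with a; exact norm_nonneg _) ?_ ?_
      · filter_upwards [hmem] with a ha
        calc ‖∫ z in Set.Ioc 0 a, D z * G z‖ ≤ ∫ z in Set.Ioc 0 a, ‖D z * G z‖ :=
            norm_integral_le_integral_norm _
          _ ≤ ∫ z in Set.Ioc 0 a, (Real.exp (γ l) * G 0) * ((1/2) * f₀ z) := by
            refine setIntegral_mono_on
              ((hDG_int.mono_set (Set.Ioc_subset_Ioc_right ha.2.le)).norm)
              (((hint a ha.1).const_mul _).const_mul _) measurableSet_Ioc ?_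
            intro z hz
            have hz0 := hz.1
            have hfz := (hf₀_pos z hz0).le
            have hu1 : Real.exp (γ z) ≤ Real.exp (γ l) := Real.exp_le_exp.mpr
              (hγ_mono (Set.mem_Ioi.mpr hz0) (Set.mem_Ioi.mpr hl) (le_trans hz.2 ha.2.le))
            have hG1 : G z ≤ G 0 := hG_bound z hz0.le
            have hG2 : 0 ≤ G z := hG_nonneg z
            rw [Real.norm_eq_abs, abs_of_nonneg (mul_nonneg (hD_nonneg z hz0) hG2)]
            have h4 : f₀ z * (Real.exp (γ z) * G z) ≤ f₀ z * (Real.exp (γ l) * G 0) :=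
              mul_le_mul_of_nonneg_left (mul_le_mul hu1 hG1 hG2 (Real.exp_pos (γ l)).le) hfz
            calc D z * G z = 1 / 2 * (f₀ z * (Real.exp (γ z) * G z)) := by
                  simp only [hDdef, hudef]; ring
              _ ≤ 1 / 2 * (f₀ z * (Real.exp (γ l) * G 0)) :=
                  mul_le_mul_of_nonneg_left h4 (by norm_num)
              _ = Real.exp (γ l) * G 0 * (1 / 2 * f₀ z) := by ring
          _ = (Real.exp (γ l) * G 0) * γ a := by
            rw [integral_const_mul, integral_const_mul, ← hγset a ha.1]
      · have h := hγ0.const_mul (Real.exp (γ l) * G 0)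
        simpa using h
    have T1 : Tendsto (fun a => ∫ z in Set.Ioc a l, D z * G z) (nhdsWithin 0 (Set.Ioi 0))
        (nhds (∫ z in Set.Ioc 0 l, D z * G z)) := by
      have heq : ∀ a ∈ Set.Ioo (0:ℝ) l, (∫ z in Set.Ioc a l, D z * G z)
          = (∫ z in Set.Ioc 0 l, D z * G z) - (∫ z in Set.Ioc 0 a, D z * G z) := by
        intro a ha
        have hun : Set.Ioc 0 a ∪ Set.Ioc a l = Set.Ioc 0 l :=
          Set.Ioc_union_Ioc_eq_Ioc ha.1.le ha.2.le
        have hdisj : Disjoint (Set.Ioc 0 a) (Set.Ioc a l) := by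
          rw [Set.disjoint_left]; rintro x ⟨_, hx2⟩ ⟨hx3, _⟩
          exact absurd hx3 (not_lt.mpr hx2)
        have h := setIntegral_union hdisj measurableSet_Ioc
          (hDG_int.mono_set (hun ▸ Set.subset_union_left))
          (hDG_int.mono_set (hun ▸ Set.subset_union_right))
        rw [hun] at h
        linarith [h]
      have h2 : Tendsto (fun a => (∫ z in Set.Ioc 0 l, D z * G z)
          - (∫ z in Set.Ioc 0 a, D z * G z)) (nhdsWithin 0 (Set.Ioi 0))
          (nhds ((∫ z in Set.Ioc 0 l, D z * G z) - 0)) := tendsto_const_nhds.sub T1'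
      rw [sub_zero] at h2
      refine h2.congr' ?_
      filter_upwards [hmem] with a ha
      exact (heq a ha).symm
    have hF'rc : Tendsto (fun a => (F' a : ℝ)) (nhdsWithin 0 (Set.Ioi 0)) (nhds (F' 0)) :=
      (F'.right_continuous 0).mono_left (nhdsWithin_mono 0 Set.Ioi_subset_Ici_self)
    have hu0 : Tendsto u (nhdsWithin 0 (Set.Ioi 0)) (nhds 1) := by
      have h := (Real.continuous_exp.tendsto (0:ℝ)).comp hγ0
      rwa [Real.exp_zero] at h
    have hG0' : Tendsto G (nhdsWithin 0 (Set.Ioi 0)) (nhds (G 0)) := by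
      have hbound : ∀ a : ℝ, 0 < a → ‖G a - G 0‖ ≤ F' a - F' 0 := by
        intro a ha0
        have h1 : G 0 = (∫ m in Set.Ioc 0 a, g m ∂μ) + G a := hGsplit 0 a le_rfl ha0.le
        have h2 : 0 ≤ ∫ m in Set.Ioc 0 a, g m ∂μ :=
          setIntegral_nonneg measurableSet_Ioc fun m _ => (hg_pos m).le
        haveI : IsFiniteMeasure (μ.restrict (Set.Ioc 0 a)) := ⟨by
          rw [Measure.restrict_apply_univ]
          exact lt_of_le_of_lt (measure_mono Set.Ioc_subset_Ioi_self) (hμIoi 0 le_rfl)⟩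
        have h3 : (∫ m in Set.Ioc 0 a, g m ∂μ) ≤ (μ (Set.Ioc 0 a)).toReal := by
          have h := setIntegral_mono_on ((hg_int 0 le_rfl).mono_set Set.Ioc_subset_Ioi_self)
            (integrable_const (μ := μ.restrict (Set.Ioc 0 a)) (1:ℝ)) measurableSet_Ioc
            (fun m hm => hg_le_one m hm.1)
          rwa [setIntegral_const, smul_eq_mul, mul_one] at h
        have h4 : (μ (Set.Ioc 0 a)).toReal = F' a - F' 0 := by
          rw [hμdef, F'.measure_Ioc, ENNReal.toReal_ofReal (sub_nonneg.mpr (F'.mono ha0.le))]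
        rw [Real.norm_eq_abs, abs_of_nonpos (by linarith)]
        linarith
      have h5 : Tendsto (fun a => G a - G 0) (nhdsWithin 0 (Set.Ioi 0)) (nhds 0) := by
        rw [tendsto_zero_iff_norm_tendsto_zero]
        refine squeeze_zero' (g := fun a => (F' a : ℝ) - F' 0)
          (by filter_upwards with a; exact norm_nonneg _) ?_ ?_
        · filter_upwards [self_mem_nhdsWithin] with a ha
          exact hbound a ha
        · have h := hF'rc.sub (tendsto_const_nhds (x := (F' 0 : ℝ)))
          simpa using h
      have h6 := h5.add (tendsto_const_nhds (x := G 0))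
      simpa using h6
    have T2 : Tendsto (fun a => (F' l - F' a) + u l * G l - u a * G a)
        (nhdsWithin 0 (Set.Ioi 0)) (nhds ((F' l - F' 0) + u l * G l - 1 * G 0)) :=
      ((tendsto_const_nhds.sub hF'rc).add tendsto_const_nhds).sub (hu0.mul hG0')
    refine tendsto_nhds_unique (T1.congr' ?_) T2
    filter_upwards [hmem] with a ha
    exact hstar a ha.1 ha.2
  have key' : (∫ z in Set.Ioc 0 l, D z * G z)
      = (F' l - F' 0) + Real.exp (γ l) * G l - G 0 := by
    rw [key]; simp only [hudef]; ring
  -- integrability of the two pieces in the statement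
  have hsub1 : IntegrableOn (fun z => Real.exp (γ z) / φp z * G z) (Set.Ioc 0 l) := by
    refine Integrable.mono' ((hint l hl).const_mul (Real.exp (γ l) * G 0)) ?_ ?_
    · have h1 : AntitoneOn (fun z => 1 / φp z) (Set.Ioi 0) := fun x hx y hy hxy =>
        one_div_le_one_div_of_le (hφp_pos x hx) (hφp_mono hx hy hxy)
      have h2 : AEMeasurable (fun z => 1 / φp z) (volume.restrict (Set.Ioc 0 l)) :=
        aemeasurable_restrict_of_antitoneOn measurableSet_Ioc (h1.mono (fun z hz => hz.1))
      have h3 : AEMeasurable (fun z => Real.exp (γ z)) (volume.restrict (Set.Ioc 0 l)) :=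
        Real.measurable_exp.comp_aemeasurable
          (hγ_meas volume _ measurableSet_Ioc (fun z hz => hz.1))
      have h4 : AEMeasurable G (volume.restrict (Set.Ioc 0 l)) :=
        hG_meas (Set.Ioc 0 l) measurableSet_Ioc (fun z hz => hz.1)
      have h5 : (fun z => Real.exp (γ z) / φp z * G z)
          = fun z => Real.exp (γ z) * (1 / φp z) * G z := by
        funext z; rw [div_eq_mul_one_div]
      rw [h5]
      exact ((h3.mul h2).mul h4).aestronglyMeasurable
    · filter_upwards [ae_restrict_mem measurableSet_Ioc] with z hz
      have hz0 := hz.1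
      have hfp : 0 < 1 / φp z := one_div_pos.mpr (hφp_pos z hz0)
      have hfm : 1 / φm z < 0 := one_div_neg.mpr (hφm_neg z hz0)
      have hle : 1 / φp z ≤ f₀ z := by simp only [hf₀def]; linarith
      have hexp : Real.exp (γ z) ≤ Real.exp (γ l) := Real.exp_le_exp.mpr
        (hγ_mono (Set.mem_Ioi.mpr hz0) (Set.mem_Ioi.mpr hl) hz.2)
      have hGl : G z ≤ G 0 := hG_bound z hz0.le
      have hGn : 0 ≤ G z := hG_nonneg z
      rw [Real.norm_eq_abs, div_eq_mul_one_div, abs_of_nonneg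
        (mul_nonneg (mul_nonneg (Real.exp_pos _).le hfp.le) hGn)]
      calc Real.exp (γ z) * (1 / φp z) * G z
          ≤ Real.exp (γ l) * f₀ z * G 0 := by
            refine mul_le_mul (mul_le_mul hexp hle hfp.le (Real.exp_pos _).le) hGl hGn ?_
            exact mul_nonneg (Real.exp_pos _).le (le_trans hfp.le hle)
        _ = Real.exp (γ l) * G 0 * f₀ z := by ring
  have hsub2 : IntegrableOn (fun z => Real.exp (γ z) / φm z * G z) (Set.Ioc 0 l) := by
    refine Integrable.mono' ((hint l hl).const_mul (Real.exp (γ l) * G 0)) ?_ ?_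
    · have h1 : MonotoneOn (fun z => 1 / φm z) (Set.Ioi 0) := fun x hx y hy hxy =>
        one_div_le_one_div_of_neg_of_le (hφm_neg x hx) (hφm_anti hx hy hxy)
      have h2 : AEMeasurable (fun z => 1 / φm z) (volume.restrict (Set.Ioc 0 l)) :=
        aemeasurable_restrict_of_monotoneOn measurableSet_Ioc (h1.mono (fun z hz => hz.1))
      have h3 : AEMeasurable (fun z => Real.exp (γ z)) (volume.restrict (Set.Ioc 0 l)) :=
        Real.measurable_exp.comp_aemeasurable
          (hγ_meas volume _ measurableSet_Ioc (fun z hz => hz.1))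
      have h4 : AEMeasurable G (volume.restrict (Set.Ioc 0 l)) :=
        hG_meas (Set.Ioc 0 l) measurableSet_Ioc (fun z hz => hz.1)
      have h5 : (fun z => Real.exp (γ z) / φm z * G z)
          = fun z => Real.exp (γ z) * (1 / φm z) * G z := by
        funext z; rw [div_eq_mul_one_div]
      rw [h5]
      exact ((h3.mul h2).mul h4).aestronglyMeasurable
    · filter_upwards [ae_restrict_mem measurableSet_Ioc] with z hz
      have hz0 := hz.1
      have hfp : 0 < 1 / φp z := one_div_pos.mpr (hφp_pos z hz0)
      have hfm : 1 / φm z < 0 := one_div_neg.mpr (hφm_neg z hz0)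
      have hle : -(1 / φm z) ≤ f₀ z := by simp only [hf₀def]; linarith
      have hexp : Real.exp (γ z) ≤ Real.exp (γ l) := Real.exp_le_exp.mpr
        (hγ_mono (Set.mem_Ioi.mpr hz0) (Set.mem_Ioi.mpr hl) hz.2)
      have hGl : G z ≤ G 0 := hG_bound z hz0.le
      have hGn : 0 ≤ G z := hG_nonneg z
      rw [Real.norm_eq_abs, div_eq_mul_one_div, abs_mul, abs_mul,
        abs_of_nonneg (Real.exp_pos (γ z)).le, abs_of_nonneg hGn, abs_of_neg hfm]
      calc Real.exp (γ z) * -(1 / φm z) * G z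
          ≤ Real.exp (γ l) * f₀ z * G 0 := by
            refine mul_le_mul (mul_le_mul hexp hle (by linarith) (Real.exp_pos _).le) hGl hGn ?_
            exact mul_nonneg (Real.exp_pos _).le (hf₀_pos z hz0).le
        _ = Real.exp (γ l) * G 0 * f₀ z := by ring
  have hdiff : (∫ z in Set.Ioc 0 l, Real.exp (γ z) / φp z * G z)
      - (∫ z in Set.Ioc 0 l, Real.exp (γ z) / φm z * G z)
      = 2 * ∫ z in Set.Ioc 0 l, D z * G z := by
    rw [← integral_sub hsub1 hsub2]
    rw [setIntegral_congr_fun (g := fun z => 2 * (D z * G z)) measurableSet_Ioc ?_,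
      integral_const_mul]
    intro z hz
    have h1 : φp z ≠ 0 := ne_of_gt (hφp_pos z hz.1)
    have h2 : φm z ≠ 0 := ne_of_lt (hφm_neg z hz.1)
    simp only [hDdef, hudef, hf₀def]
    field_simp
  have hfinal : (1/2) * ((F' 0 + G 0 + (∫ z in Set.Ioc 0 l, Real.exp (γ z) / φp z * G z))
      - (-(F' 0) - G 0 + (∫ z in Set.Ioc 0 l, Real.exp (γ z) / φm z * G z)))
      = F' l + Real.exp (γ l) * G l := by linarith [hdiff, key']
  rw [hAp l hl.le, hAm l hl.le, hAp0, hAm0,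
    intervalIntegral.integral_of_le hl.le, intervalIntegral.integral_of_le hl.le]
  exact hfinal
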